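/- Let f : ℝ^n → ℝ be μ-strongly convex with L-Lipschitz gradient, and let α < 2/(μ+L). Then for all x, y ∈ ℝ^n, ‖x - α∇f(x) - (y - α∇f(y))‖² ≤ (1 - αγ)‖x - y‖², where γ = 2μL/(μ+L). -/

import Mathlib

open scoped RealInnerProductSpace

theorem descent_lemma {n : ℕ} (f : EuclideanSpace ℝ (Fin n) → ℝ)
    (f' : EuclideanSpace ℝ (Fin n) → EuclideanSpace ℝ (Fin n)) (L : ℝ) 
    (hgrad : ∀ x, HasGradientAt f (f' x) x)
    (hlip : ∀ x y, ‖f' x - f' y‖ ≤ L * ‖x - y‖)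
    (x y : EuclideanSpace ℝ (Fin n)) :
    f y ≤ f x + ⟪f' x, y - x⟫ + L / 2 * ‖y - x‖ ^ 2 := by
  set d := y - x with hd
  have hline : ∀ t : ℝ, HasDerivAt (fun s : ℝ => f (x + s • d)) ⟪f' (x + t • d), d⟫ t := by
    intro t
    have h1 : HasDerivAt (fun s : ℝ => x + s • d) d t := by
      simpa using ((hasDerivAt_id t).smul_const d).const_add x
    have := (hgrad (x + t • d)).hasFDerivAt.comp_hasDerivAt t h1
    simp at this
    exact this
  set g : ℝ → ℝ := fun t => f (x + t • d) - t * ⟪f' x, d⟫ - L / 2 * t ^ 2 * ‖d‖ ^ 2 with hg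
  have hgderiv : ∀ t : ℝ, HasDerivAt g (⟪f' (x + t • d), d⟫ - ⟪f' x, d⟫ - L * t * ‖d‖ ^ 2) t := by
    intro t
    have h2 : HasDerivAt (fun s : ℝ => s * ⟪f' x, d⟫) ⟪f' x, d⟫ t := by
      simpa using (hasDerivAt_id t).mul_const (⟪f' x, d⟫)
    have h3 : HasDerivAt (fun s : ℝ => L / 2 * s ^ 2 * ‖d‖ ^ 2) (L * t * ‖d‖ ^ 2) t := by
      have := ((hasDerivAt_pow 2 t).const_mul (L / 2)).mul_const (‖d‖ ^ 2)
      refine this.congr_deriv ?_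
      ring
    have := ((hline t).sub h2).sub h3
    exact this
  have hmono : AntitoneOn g (Set.Icc (0:ℝ) 1) := by
    apply antitoneOn_of_deriv_nonpos (convex_Icc 0 1)
    · exact fun t _ => ((hgderiv t).differentiableAt).continuousAt.continuousWithinAt
    · exact fun t _ => ((hgderiv t).differentiableAt).differentiableWithinAt
    · intro t ht
      rw [interior_Icc] at ht
      rw [(hgderiv t).deriv]
      have h4 : ⟪f' (x + t • d) - f' x, d⟫ ≤ ‖f' (x + t • d) - f' x‖ * ‖d‖ :=
        real_inner_le_norm _ _
      have h5 : ‖f' (x + t • d) - f' x‖ ≤ L * (t * ‖d‖) := by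
        have := hlip (x + t • d) x
        simpa [norm_smul, abs_of_nonneg ht.1.le, mul_assoc] using this
      have h6 : ⟪f' (x + t • d), d⟫ - ⟪f' x, d⟫ ≤ L * t * ‖d‖ * ‖d‖ := by
        rw [← inner_sub_left]
        calc ⟪f' (x + t • d) - f' x, d⟫ ≤ ‖f' (x + t • d) - f' x‖ * ‖d‖ := h4
          _ ≤ L * (t * ‖d‖) * ‖d‖ := by
              apply mul_le_mul_of_nonneg_right h5 (norm_nonneg _)
          _ = L * t * ‖d‖ * ‖d‖ := by ring
      nlinarith [norm_nonneg d]
  have hm := hmono (Set.left_mem_Icc.2 zero_le_one) (Set.right_mem_Icc.2 zero_le_one) zero_le_one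
  have hxy : x + (1:ℝ) • d = y := by simp [hd]
  have h0 : g 0 = f x := by
    show f (x + (0:ℝ) • d) - 0 * ⟪f' x, d⟫ - L / 2 * 0 ^ 2 * ‖d‖ ^ 2 = f x
    simp
  have h1 : g 1 = f y - ⟪f' x, d⟫ - L / 2 * ‖d‖ ^ 2 := by
    show f (x + (1:ℝ) • d) - 1 * ⟪f' x, d⟫ - L / 2 * 1 ^ 2 * ‖d‖ ^ 2 = _
    rw [hxy]; ring
  rw [h0, h1] at hm
  linarith

theorem coco_aux {n : ℕ} (φ : EuclideanSpace ℝ (Fin n) → ℝ)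
    (φ' : EuclideanSpace ℝ (Fin n) → EuclideanSpace ℝ (Fin n)) (C : ℝ) (hC : 0 < C)
    (hconv : ∀ x y, φ x + ⟪φ' x, y - x⟫ ≤ φ y)
    (hdesc : ∀ x y, φ y ≤ φ x + ⟪φ' x, y - x⟫ + C / 2 * ‖y - x‖ ^ 2)
    (x y : EuclideanSpace ℝ (Fin n)) :
    ‖φ' y - φ' x‖ ^ 2 ≤ C * ⟪φ' y - φ' x, y - x⟫ := by
  have breg : ∀ x y, φ x + ⟪φ' x, y - x⟫ + 1 / (2 * C) * ‖φ' y - φ' x‖ ^ 2 ≤ φ y := by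
    intro x y
    set g := φ' y - φ' x with hgdef
    set z := y - (1 / C) • g with hz
    have h1 := hconv x z
    have h2 := hdesc y z
    have e1 : ⟪φ' x, z - x⟫ = ⟪φ' x, y - x⟫ - (1 / C) * ⟪φ' x, g⟫ := by
      have : z - x = (y - x) - (1 / C) • g := by rw [hz]; abel
      rw [this, inner_sub_right, real_inner_smul_right]
    have e2 : ⟪φ' y, z - y⟫ = -(1 / C) * ⟪φ' y, g⟫ := by
      have : z - y = -((1 / C) • g) := by rw [hz]; abel
      rw [this, inner_neg_right, real_inner_smul_right]; ring
    have e3 : ‖z - y‖ ^ 2 = (1 / C) ^ 2 * ‖g‖ ^ 2 := by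
      have : z - y = -((1 / C) • g) := by rw [hz]; abel
      rw [this, norm_neg, norm_smul, mul_pow]
      congr 1
      rw [Real.norm_eq_abs, sq_abs]
    have e4 : ⟪φ' y, g⟫ - ⟪φ' x, g⟫ = ‖g‖ ^ 2 := by
      rw [← inner_sub_left, ← hgdef, real_inner_self_eq_norm_sq]
    rw [e1] at h1
    rw [e2, e3] at h2
    have hC' : C ≠ 0 := hC.ne'
    have : C / 2 * ((1 / C) ^ 2 * ‖g‖ ^ 2) = 1 / (2 * C) * ‖g‖ ^ 2 := by
      field_simp
    have h4 : 1 / C * ⟪φ' y, g⟫ - 1 / C * ⟪φ' x, g⟫ = 1 / C * ‖g‖ ^ 2 := by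
      rw [← mul_sub, e4]
    have h5 : 1 / C * ‖g‖ ^ 2 = 2 * (1 / (2 * C) * ‖g‖ ^ 2) := by
      field_simp
    linarith [h1, h2]
  have b1 := breg x y
  have b2 := breg y x
  have e5 : ⟪φ' x, y - x⟫ + ⟪φ' y, x - y⟫ = -⟪φ' y - φ' x, y - x⟫ := by
    rw [show x - y = -(y - x) by abel, inner_neg_right, inner_sub_left]
    ring
  have e6 : ‖φ' x - φ' y‖ = ‖φ' y - φ' x‖ := norm_sub_rev _ _
  have hC' : (0:ℝ) < 2 * C := by linarith
  rw [e6] at b2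
  have h10 : 2 * (1 / (2 * C)) * ‖φ' y - φ' x‖ ^ 2 ≤ ⟪φ' y - φ' x, y - x⟫ := by
    nlinarith [b1, b2, e5]
  have h9 := mul_le_mul_of_nonneg_left h10 hC.le
  have e8 : C * (2 * (1 / (2 * C)) * ‖φ' y - φ' x‖ ^ 2) = ‖φ' y - φ' x‖ ^ 2 := by
    field_simp
  rw [e8] at h9
  exact h9

/-- Strong monotonicity of the gradient from strong convexity. -/
theorem strong_mono {n : ℕ} (f : EuclideanSpace ℝ (Fin n) → ℝ)
    (f' : EuclideanSpace ℝ (Fin n) → EuclideanSpace ℝ (Fin n)) (μ : ℝ)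
    (hsc : ∀ x y, f y ≥ f x + ⟪f' x, y - x⟫ + μ / 2 * ‖y - x‖ ^ 2)
    (x y : EuclideanSpace ℝ (Fin n)) :
    μ * ‖x - y‖ ^ 2 ≤ ⟪f' x - f' y, x - y⟫ := by
  have h1 := hsc x y
  have h2 := hsc y x
  have e1 : ‖y - x‖ = ‖x - y‖ := norm_sub_rev _ _
  have e2 : ⟪f' x, y - x⟫ = -⟪f' x, x - y⟫ := by
    rw [show y - x = -(x - y) by abel, inner_neg_right]
  have e3 : ⟪f' x - f' y, x - y⟫ = ⟪f' x, x - y⟫ - ⟪f' y, x - y⟫ := inner_sub_left _ _ _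
  rw [e1, e2] at h1
  linarith

/-- Nesterov's coercivity inequality. -/
theorem coercivity {n : ℕ} (f : EuclideanSpace ℝ (Fin n) → ℝ)
    (f' : EuclideanSpace ℝ (Fin n) → EuclideanSpace ℝ (Fin n))
    (μ L : ℝ) (hμ : 0 < μ) (hL : 0 < L)
    (hgrad : ∀ x, HasGradientAt f (f' x) x)
    (hsc : ∀ x y, f y ≥ f x + ⟪f' x, y - x⟫ + μ / 2 * ‖y - x‖ ^ 2)
    (hlip : ∀ x y, ‖f' x - f' y‖ ≤ L * ‖x - y‖)
    (x y : EuclideanSpace ℝ (Fin n)) :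
    ‖f' x - f' y‖ ^ 2 + μ * L * ‖x - y‖ ^ 2 ≤ (μ + L) * ⟪f' x - f' y, x - y⟫ := by
  have hsm := strong_mono f f' μ hsc x y
  by_cases hxy : x = y
  · subst hxy; simp
  have hd : (0:ℝ) < ‖x - y‖ := by
    rw [norm_pos_iff]; exact sub_ne_zero.2 hxy
  have hcs : ⟪f' x - f' y, x - y⟫ ≤ ‖f' x - f' y‖ * ‖x - y‖ := real_inner_le_norm _ _
  have hμL : μ ≤ L := by
    have h := mul_le_mul_of_nonneg_right (hlip x y) (norm_nonneg (x - y))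
    nlinarith [hsm, hcs, h, mul_pos hd hd]
  rcases eq_or_lt_of_le hμL with heq | hlt
  · -- μ = L
    subst heq
    nlinarith [hsm, mul_self_le_mul_self (norm_nonneg (f' x - f' y)) (hlip x y),
      mul_le_mul_of_nonneg_left hsm hμ.le]
  · -- μ < L : apply cocoercivity to φ = f - μ/2 ‖·‖²
    set φ : EuclideanSpace ℝ (Fin n) → ℝ := fun z => f z - μ / 2 * ‖z‖ ^ 2 with hφ
    set φ' : EuclideanSpace ℝ (Fin n) → EuclideanSpace ℝ (Fin n) := fun z => f' z - μ • z with hφ'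
    have key : ∀ a b : EuclideanSpace ℝ (Fin n),
        ⟪φ' a, b - a⟫ = ⟪f' a, b - a⟫ + μ / 2 * ‖b - a‖ ^ 2 - μ / 2 * ‖b‖ ^ 2
          + μ / 2 * ‖a‖ ^ 2 := by
      intro a b
      have e1 : ⟪φ' a, b - a⟫ = ⟪f' a, b - a⟫ - μ * ⟪a, b - a⟫ := by
        rw [hφ', inner_sub_left, real_inner_smul_left]
      have e2 : ‖b - a‖ ^ 2 = ‖b‖ ^ 2 - 2 * ⟪a, b⟫ + ‖a‖ ^ 2 := by
        rw [norm_sub_sq_real, real_inner_comm b a]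
      have e3 : ⟪a, b - a⟫ = ⟪a, b⟫ - ⟪a, a⟫ := inner_sub_right _ _ _
      have e4 : ⟪a, a⟫ = ‖a‖ ^ 2 := real_inner_self_eq_norm_sq a
      rw [e1, e3, e4, e2]
      ring
    have hconv : ∀ a b, φ a + ⟪φ' a, b - a⟫ ≤ φ b := by
      intro a b
      have := hsc a b
      have hk := key a b
      simp only [hφ]
      linarith
    have hdesc : ∀ a b, φ b ≤ φ a + ⟪φ' a, b - a⟫ + (L - μ) / 2 * ‖b - a‖ ^ 2 := by
      intro a b
      have := descent_lemma f f' L hgrad hlip a b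
      have hk := key a b
      simp only [hφ]
      linarith
    have hco := coco_aux φ φ' (L - μ) (by linarith) hconv hdesc y x
    have e5 : φ' x - φ' y = (f' x - f' y) - μ • (x - y) := by
      rw [hφ']; simp only []
      rw [smul_sub]; abel
    rw [e5] at hco
    have e6 : ‖(f' x - f' y) - μ • (x - y)‖ ^ 2
        = ‖f' x - f' y‖ ^ 2 - 2 * (μ * ⟪f' x - f' y, x - y⟫) + μ ^ 2 * ‖x - y‖ ^ 2 := by
      rw [norm_sub_sq_real, real_inner_smul_right, norm_smul, mul_pow, Real.norm_eq_abs, sq_abs]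
    have e7 : ⟪(f' x - f' y) - μ • (x - y), x - y⟫
        = ⟪f' x - f' y, x - y⟫ - μ * ‖x - y‖ ^ 2 := by
      rw [inner_sub_left, real_inner_smul_left, real_inner_self_eq_norm_sq]
    rw [e6, e7] at hco
    nlinarith [hco]


/-- Contraction property of a gradient step for a strongly convex function with
Lipschitz gradient (Nesterov). -/
theorem gradient_step_contraction {n : ℕ}
    (f : EuclideanSpace ℝ (Fin n) → ℝ) (f' : EuclideanSpace ℝ (Fin n) → EuclideanSpace ℝ (Fin n))
    (μ L α : ℝ) (hμ : 0 < μ) (hL : 0 < L)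
    (hgrad : ∀ x, HasGradientAt f (f' x) x)
    (hsc : ∀ x y, f y ≥ f x + ⟪f' x, y - x⟫ + μ / 2 * ‖y - x‖ ^ 2)
    (hlip : ∀ x y, ‖f' x - f' y‖ ≤ L * ‖x - y‖)
    (hα : 0 < α) (hα2 : α < 2 / (μ + L))
    (x y : EuclideanSpace ℝ (Fin n)) :
    ‖x - α • f' x - (y - α • f' y)‖ ^ 2 ≤ (1 - α * (2 * μ * L / (μ + L))) * ‖x - y‖ ^ 2 := by
  have hP : (0:ℝ) < μ + L := by linarith
  have key := coercivity f f' μ L hμ hL hgrad hsc hlip x y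
  have hrw : x - α • f' x - (y - α • f' y) = (x - y) - α • (f' x - f' y) := by
    rw [smul_sub]; abel
  rw [hrw]
  have e6 : ‖(x - y) - α • (f' x - f' y)‖ ^ 2
      = ‖x - y‖ ^ 2 - 2 * (α * ⟪x - y, f' x - f' y⟫) + α ^ 2 * ‖f' x - f' y‖ ^ 2 := by
    rw [norm_sub_sq_real, real_inner_smul_right, norm_smul, mul_pow, Real.norm_eq_abs, sq_abs]
  rw [e6]
  have hsym : ⟪x - y, f' x - f' y⟫ = ⟪f' x - f' y, x - y⟫ := real_inner_comm _ _
  rw [hsym]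
  have hαP : α * (μ + L) < 2 := by
    rw [lt_div_iff₀ hP] at hα2; linarith
  have hkey2 : α * (2 * μ * L / (μ + L)) * ‖x - y‖ ^ 2
      ≤ 2 * (α * ⟪f' x - f' y, x - y⟫) - α ^ 2 * ‖f' x - f' y‖ ^ 2 := by
    rw [show α * (2 * μ * L / (μ + L)) * ‖x - y‖ ^ 2
        = α * (2 * μ * L) * ‖x - y‖ ^ 2 / (μ + L) by ring, div_le_iff₀ hP]
    nlinarith [mul_le_mul_of_nonneg_left key (by linarith : (0:ℝ) ≤ 2 * α),
      mul_nonneg (mul_nonneg (by linarith : (0:ℝ) ≤ 2 - α * (μ + L)) hα.le)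
        (sq_nonneg ‖f' x - f' y‖)]
  nlinarith [hkey2]
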